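/- For every finite simple graph G, a^*(G^{×2}) = a^*(G), where a^*(K) = a(K) if a(K) ≤ 1/2 and a^*(K) = 1 if a(K) > 1/2, with a(K) = max{|U|/(|U| + |N_K(U)|) : U a nonempty independent set of K}. -/

import Mathlib

open scoped Classical
open Filter

/-- Categorical (tensor) product of two simple graphs. -/
def tensorProd {α β : Type*} (G : SimpleGraph α) (H : SimpleGraph β) :
    SimpleGraph (α × β) where
  Adj p q := G.Adj p.1 q.1 ∧ H.Adj p.2 q.2
  symm := ⟨fun p q h => ⟨h.1.symm, h.2.symm⟩⟩
  loopless := ⟨fun p h => G.ne_of_adj h.1 rfl⟩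

/-- A finset is independent. -/
def IsIndep {α : Type*} (G : SimpleGraph α) (U : Finset α) : Prop :=
  ∀ u ∈ U, ∀ v ∈ U, ¬ G.Adj u v

/-- Neighborhood of a finset. -/
noncomputable def nbhd {α : Type*} [Fintype α] (G : SimpleGraph α) (U : Finset α) : Finset α :=
  Finset.univ.filter (fun v => ∃ u ∈ U, G.Adj u v)

/-- Independence number. -/
noncomputable def alphaNum {α : Type*} [Fintype α] (G : SimpleGraph α) : ℕ :=
  sSup {n : ℕ | ∃ U : Finset α, IsIndep G U ∧ U.card = n}

/-- Independence ratio. -/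
noncomputable def iRatio {α : Type*} [Fintype α] (G : SimpleGraph α) : ℝ :=
  (alphaNum G : ℝ) / (Fintype.card α : ℝ)

/-- a(G): the maximum of |U|/(|U|+|N(U)|) over nonempty independent sets. -/
noncomputable def aRatio {α : Type*} [Fintype α] (G : SimpleGraph α) : ℝ :=
  sSup {r : ℝ | ∃ U : Finset α, U.Nonempty ∧ IsIndep G U ∧
    r = (U.card : ℝ) / ((U.card : ℝ) + ((nbhd G U).card : ℝ))}

/-- b(G): the minimum of |N(U)|/|U| over nonempty independent sets. -/
noncomputable def bRatio {α : Type*} [Fintype α] (G : SimpleGraph α) : ℝ :=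
  sInf {r : ℝ | ∃ U : Finset α, U.Nonempty ∧ IsIndep G U ∧
    r = ((nbhd G U).card : ℝ) / (U.card : ℝ)}

/-- a*(G). -/
noncomputable def aStar {α : Type*} [Fintype α] (G : SimpleGraph α) : ℝ :=
  if aRatio G ≤ 1/2 then aRatio G else 1

/-- k-th categorical power of G. -/
def tensorPow {α : Type*} (G : SimpleGraph α) (k : ℕ) : SimpleGraph (Fin k → α) where
  Adj x y := x ≠ y ∧ ∀ i, G.Adj (x i) (y i)
  symm := ⟨fun x y h => ⟨h.1.symm, fun i => (h.2 i).symm⟩⟩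
  loopless := ⟨fun x h => h.1 rfl⟩

/-- Disjoint union of two simple graphs. -/
def disjUnion {α β : Type*} (G : SimpleGraph α) (H : SimpleGraph β) :
    SimpleGraph (α ⊕ β) where
  Adj p q := match p, q with
    | Sum.inl a, Sum.inl b => G.Adj a b
    | Sum.inr a, Sum.inr b => H.Adj a b
    | _, _ => False
  symm := ⟨by rintro (a|a) (b|b) h <;> simp_all <;> exact h.symm⟩
  loopless := ⟨by rintro (a|a) h <;> simp_all⟩

section Aux

open Finset

variable {α : Type*} [Fintype α]

def ratioSet (G : SimpleGraph α) : Set ℝ :=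
  {r : ℝ | ∃ U : Finset α, U.Nonempty ∧ IsIndep G U ∧
    r = (U.card : ℝ) / ((U.card : ℝ) + ((nbhd G U).card : ℝ))}

lemma aRatio_eq (G : SimpleGraph α) : aRatio G = sSup (ratioSet G) := rfl

lemma ratioSet_finite (G : SimpleGraph α) : (ratioSet G).Finite := by
  have h : ratioSet G ⊆
      (fun U : Finset α => (U.card : ℝ) / ((U.card : ℝ) + ((nbhd G U).card : ℝ))) '' Set.univ := by
    rintro r ⟨U, -, -, h3⟩
    exact ⟨U, trivial, h3.symm⟩
  exact (Set.finite_univ.image _).subset h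

lemma ratioSet_nonempty [Nonempty α] (G : SimpleGraph α) : (ratioSet G).Nonempty := by
  obtain ⟨a⟩ := ‹Nonempty α›
  refine ⟨_, {a}, Finset.singleton_nonempty a, ?_, rfl⟩
  intro u hu v hv hadj
  simp only [Finset.mem_singleton] at hu hv
  subst hu; subst hv
  exact G.loopless.irrefl _ hadj

lemma le_aRatio (G : SimpleGraph α) {r : ℝ} (h : r ∈ ratioSet G) : r ≤ aRatio G :=
  le_csSup (ratioSet_finite G).bddAbove h

lemma aRatio_le [Nonempty α] (G : SimpleGraph α) {c : ℝ} (h : ∀ r ∈ ratioSet G, r ≤ c) :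
    aRatio G ≤ c :=
  csSup_le (ratioSet_nonempty G) h

lemma aRatio_mem [Nonempty α] (G : SimpleGraph α) : aRatio G ∈ ratioSet G :=
  (ratioSet_nonempty G).csSup_mem (ratioSet_finite G)

lemma ratio_pos {G : SimpleGraph α} {r : ℝ} (h : r ∈ ratioSet G) : 0 < r := by
  obtain ⟨U, hne, -, rfl⟩ := h
  have h1 : (0:ℝ) < U.card := by exact_mod_cast Finset.card_pos.mpr hne
  positivity

lemma aRatio_pos [Nonempty α] (G : SimpleGraph α) : 0 < aRatio G :=
  ratio_pos (aRatio_mem G)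

lemma indep_bound [Nonempty α] (G : SimpleGraph α) {U : Finset α} (hU : IsIndep G U) :
    (1 - aRatio G) * U.card ≤ aRatio G * (nbhd G U).card := by
  rcases U.eq_empty_or_nonempty with rfl | hne
  · have h0 : (0:ℝ) ≤ aRatio G * ((nbhd G (∅:Finset α)).card : ℝ) :=
      mul_nonneg (aRatio_pos G).le (by positivity)
    simpa using h0
  · have hmem : ((U.card : ℝ) / ((U.card : ℝ) + ((nbhd G U).card : ℝ))) ∈ ratioSet G :=
      ⟨U, hne, hU, rfl⟩
    have hle := le_aRatio G hmem
    have hk : (0:ℝ) < U.card := by exact_mod_cast Finset.card_pos.mpr hne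
    have hm : (0:ℝ) ≤ (nbhd G U).card := by positivity
    have hd : (0:ℝ) < (U.card : ℝ) + (nbhd G U).card := by linarith
    rw [div_le_iff₀ hd] at hle
    nlinarith [hle]

end Aux
section Key

open Finset

variable {α : Type*} [Fintype α] [Nonempty α]

lemma mem_nbhd {G : SimpleGraph α} {S : Finset α} {v : α} :
    v ∈ nbhd G S ↔ ∃ u ∈ S, G.Adj u v := by
  simp [nbhd]

/-- F' : a·|R ∩ N(R)| + (1-a)·|R \ N(R)| ≤ a·|N(R)|. -/
lemma key_Q (G : SimpleGraph α) (R : Finset α) :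
    aRatio G * ((R ∩ nbhd G R).card : ℝ) + (1 - aRatio G) * ((R \ nbhd G R).card : ℝ)
      ≤ aRatio G * ((nbhd G R).card : ℝ) := by
  set I : Finset α := R \ nbhd G R with hIdef
  have hI : IsIndep G I := by
    intro u hu v hv hadj
    rw [hIdef, Finset.mem_sdiff] at hu hv
    exact hu.2 (mem_nbhd.mpr ⟨v, hv.1, hadj.symm⟩)
  -- (R ∩ N(R)) and nbhd G I are disjoint subsets of nbhd G R
  have hsub : (R ∩ nbhd G R) ∪ nbhd G I ⊆ nbhd G R := by
    intro z hz
    rcases Finset.mem_union.mp hz with hz | hz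
    · exact (Finset.mem_inter.mp hz).2
    · obtain ⟨u, hu, hadj⟩ := mem_nbhd.mp hz
      rw [hIdef, Finset.mem_sdiff] at hu
      exact mem_nbhd.mpr ⟨u, hu.1, hadj⟩
  have hdisj : Disjoint (R ∩ nbhd G R) (nbhd G I) := by
    rw [Finset.disjoint_left]
    intro z hz hz'
    obtain ⟨u, hu, hadj⟩ := mem_nbhd.mp hz'
    rw [hIdef, Finset.mem_sdiff] at hu
    exact hu.2 (mem_nbhd.mpr ⟨z, (Finset.mem_inter.mp hz).1, hadj.symm⟩)
  have hcard : (R ∩ nbhd G R).card + (nbhd G I).card ≤ (nbhd G R).card := by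
    rw [← Finset.card_union_of_disjoint hdisj]
    exact Finset.card_le_card hsub
  have hcardR : ((R ∩ nbhd G R).card : ℝ) + ((nbhd G I).card : ℝ) ≤ ((nbhd G R).card : ℝ) := by
    exact_mod_cast hcard
  have hib := indep_bound G hI
  have hapos := aRatio_pos G
  nlinarith [hib, hcardR]

/-- Column form: if `T ⊆ W` and `T` avoids `N(W)`, `a ≤ 1/2`, then
`a·|W| + (1-2a)·|T| ≤ a·|N(W)|`. -/
lemma key_col (G : SimpleGraph α) (ha : aRatio G ≤ 1/2) {W T : Finset α}
    (hTW : T ⊆ W) (hTN : ∀ t ∈ T, t ∉ nbhd G W) :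
    aRatio G * (W.card : ℝ) + (1 - 2 * aRatio G) * (T.card : ℝ)
      ≤ aRatio G * ((nbhd G W).card : ℝ) := by
  have hTJ : T ⊆ W \ nbhd G W := by
    intro t ht
    exact Finset.mem_sdiff.mpr ⟨hTW ht, hTN t ht⟩
  have hTcard : (T.card : ℝ) ≤ ((W \ nbhd G W).card : ℝ) := by
    exact_mod_cast Finset.card_le_card hTJ
  have hsplit : ((W ∩ nbhd G W).card : ℝ) + ((W \ nbhd G W).card : ℝ) = (W.card : ℝ) := by
    exact_mod_cast Finset.card_inter_add_card_sdiff W (nbhd G W)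
  have hq := key_Q G W
  have haW : aRatio G * (W.card : ℝ)
      = aRatio G * ((W ∩ nbhd G W).card : ℝ) + aRatio G * ((W \ nbhd G W).card : ℝ) := by
    rw [← hsplit]; ring
  have h2a : (0:ℝ) ≤ 1 - 2 * aRatio G := by linarith
  nlinarith [hq, hTcard, hsplit, haW, h2a]

/-- Row form: (1-a)·|R| ≤ a·|N(R)| + (1-2a)·|R ∩ N(R)|. -/
lemma key_row (G : SimpleGraph α) (R : Finset α) :
    (1 - aRatio G) * (R.card : ℝ)
      ≤ aRatio G * ((nbhd G R).card : ℝ)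
        + (1 - 2 * aRatio G) * ((R ∩ nbhd G R).card : ℝ) := by
  have hsplit : ((R ∩ nbhd G R).card : ℝ) + ((R \ nbhd G R).card : ℝ) = (R.card : ℝ) := by
    exact_mod_cast Finset.card_inter_add_card_sdiff R (nbhd G R)
  have hq := key_Q G R
  have haR : aRatio G * (R.card : ℝ)
      = aRatio G * ((R ∩ nbhd G R).card : ℝ) + aRatio G * ((R \ nbhd G R).card : ℝ) := by
    rw [← hsplit]; ring
  linarith [hq, hsplit, haR]

end Key
section Count

open Finset

variable {α β : Type*} [Fintype α] [Fintype β]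

lemma card_fiber_fst (S : Finset (α × β)) :
    S.card = ∑ x : α, (Finset.univ.filter (fun b => (x, b) ∈ S)).card := by
  have h1 : S.card = ∑ p : α × β, if p ∈ S then 1 else 0 := by
    rw [Finset.sum_ite_mem, Finset.univ_inter, Finset.card_eq_sum_ones]
  rw [h1, Fintype.sum_prod_type]
  exact Finset.sum_congr rfl (fun x _ => (Finset.card_filter _ _).symm)

lemma card_fiber_snd (S : Finset (α × β)) :
    S.card = ∑ b : β, (Finset.univ.filter (fun x => (x, b) ∈ S)).card := by
  have h1 : S.card = ∑ p : α × β, if p ∈ S then 1 else 0 := by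
    rw [Finset.sum_ite_mem, Finset.univ_inter, Finset.card_eq_sum_ones]
  rw [h1, Fintype.sum_prod_type_right]
  exact Finset.sum_congr rfl (fun b _ => (Finset.card_filter _ _).symm)

end Count
section Prod

open Finset

variable {α : Type*} [Fintype α]

noncomputable def colU (U : Finset (α × α)) (x : α) : Finset α :=
  Finset.univ.filter (fun b => (x, b) ∈ U)

noncomputable def rowU (U : Finset (α × α)) (b : α) : Finset α :=
  Finset.univ.filter (fun x => (x, b) ∈ U)

noncomputable def colW (G : SimpleGraph α) (U : Finset (α × α)) (x : α) : Finset α :=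
  Finset.univ.filter (fun b => ∃ x', G.Adj x' x ∧ (x', b) ∈ U)

lemma mem_colW {G : SimpleGraph α} {U : Finset (α × α)} {x b : α} :
    b ∈ colW G U x ↔ x ∈ nbhd G (rowU U b) := by
  simp [colW, rowU, nbhd]
  constructor
  · rintro ⟨x', h1, h2⟩; exact ⟨x', h2, h1⟩
  · rintro ⟨x', h1, h2⟩; exact ⟨x', h2, h1⟩

lemma prod_count1 (G : SimpleGraph α) (U : Finset (α × α)) :
    (nbhd (tensorProd G G) U).card = ∑ x : α, (nbhd G (colW G U x)).card := by
  rw [card_fiber_fst (nbhd (tensorProd G G) U)]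
  refine Finset.sum_congr rfl (fun x _ => ?_)
  congr 1
  ext b
  simp only [Finset.mem_filter, Finset.mem_univ, true_and, nbhd, colW]
  constructor
  · rintro ⟨⟨x', a⟩, hin, h1, h2⟩
    exact ⟨a, ⟨x', h1, hin⟩, h2⟩
  · rintro ⟨a, ⟨x', h1, hin⟩, h2⟩
    exact ⟨⟨x', a⟩, hin, h1, h2⟩

lemma prod_count2 (G : SimpleGraph α) (U : Finset (α × α)) :
    ∑ x : α, (colW G U x).card = ∑ b : α, (nbhd G (rowU U b)).card := by
  have h1 := card_fiber_fst (Finset.univ.filter (fun p : α × α => p.2 ∈ colW G U p.1))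
  have h2 := card_fiber_snd (Finset.univ.filter (fun p : α × α => p.2 ∈ colW G U p.1))
  rw [h1] at h2
  calc ∑ x : α, (colW G U x).card
      = ∑ x : α, (Finset.univ.filter (fun b =>
          (x, b) ∈ Finset.univ.filter (fun p : α × α => p.2 ∈ colW G U p.1))).card := by
        refine Finset.sum_congr rfl (fun x _ => ?_); congr 1; ext b; simp
    _ = ∑ b : α, (Finset.univ.filter (fun x =>
          (x, b) ∈ Finset.univ.filter (fun p : α × α => p.2 ∈ colW G U p.1))).card := h2
    _ = ∑ b : α, (nbhd G (rowU U b)).card := by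
        refine Finset.sum_congr rfl (fun b _ => ?_); congr 1; ext x
        simp [mem_colW.symm]

lemma prod_count3 (G : SimpleGraph α) (U : Finset (α × α)) :
    ∑ x : α, (colU U x ∩ colW G U x).card
      = ∑ b : α, (rowU U b ∩ nbhd G (rowU U b)).card := by
  have h1 := card_fiber_fst (Finset.univ.filter
    (fun p : α × α => p ∈ U ∧ p.2 ∈ colW G U p.1))
  have h2 := card_fiber_snd (Finset.univ.filter
    (fun p : α × α => p ∈ U ∧ p.2 ∈ colW G U p.1))
  rw [h1] at h2
  calc ∑ x : α, (colU U x ∩ colW G U x).card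
      = ∑ x : α, (Finset.univ.filter (fun b =>
          (x, b) ∈ Finset.univ.filter
            (fun p : α × α => p ∈ U ∧ p.2 ∈ colW G U p.1))).card := by
        refine Finset.sum_congr rfl (fun x _ => ?_); congr 1; ext b
        simp [colU]
    _ = ∑ b : α, (Finset.univ.filter (fun x =>
          (x, b) ∈ Finset.univ.filter
            (fun p : α × α => p ∈ U ∧ p.2 ∈ colW G U p.1))).card := h2
    _ = ∑ b : α, (rowU U b ∩ nbhd G (rowU U b)).card := by
        refine Finset.sum_congr rfl (fun b _ => ?_); congr 1; ext x
        simp [rowU, mem_colW]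

lemma prod_count4 (U : Finset (α × α)) :
    U.card = ∑ b : α, (rowU U b).card := by
  rw [card_fiber_snd U]; rfl

end Prod
section Main

open Finset

variable {α : Type*} [Fintype α] [Nonempty α]

lemma main_upper (G : SimpleGraph α) (ha : aRatio G ≤ 1/2)
    {U : Finset (α × α)} (hU : IsIndep (tensorProd G G) U) :
    (1 - aRatio G) * (U.card : ℝ)
      ≤ aRatio G * (((nbhd (tensorProd G G) U).card : ℝ)) := by
  set a := aRatio G with hadef
  -- column inequality
  have hx : ∀ x : α,
      a * ((colW G U x).card : ℝ) + (1 - 2*a) * ((colU U x ∩ colW G U x).card : ℝ)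
        ≤ a * ((nbhd G (colW G U x)).card : ℝ) := by
    intro x
    refine key_col G ha (Finset.inter_subset_right) ?_
    intro b hb hbn
    have hbU : (x, b) ∈ U := by
      have := (Finset.mem_inter.mp hb).1
      simpa [colU] using this
    obtain ⟨a', ha', hadj⟩ := mem_nbhd.mp hbn
    simp only [colW, Finset.mem_filter, Finset.mem_univ, true_and] at ha'
    obtain ⟨x', hx', hx'U⟩ := ha'
    exact hU _ hx'U _ hbU ⟨hx', hadj⟩
  have hb : ∀ b : α,
      (1 - a) * ((rowU U b).card : ℝ)
        ≤ a * ((nbhd G (rowU U b)).card : ℝ)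
          + (1 - 2*a) * ((rowU U b ∩ nbhd G (rowU U b)).card : ℝ) :=
    fun b => key_row G (rowU U b)
  -- cast counting identities
  have c1 : ((nbhd (tensorProd G G) U).card : ℝ)
      = ∑ x : α, ((nbhd G (colW G U x)).card : ℝ) := by
    exact_mod_cast congrArg (Nat.cast : ℕ → ℝ) (prod_count1 G U)
  have c2 : ∑ x : α, ((colW G U x).card : ℝ)
      = ∑ b : α, ((nbhd G (rowU U b)).card : ℝ) := by
    exact_mod_cast congrArg (Nat.cast : ℕ → ℝ) (prod_count2 G U)
  have c3 : ∑ x : α, ((colU U x ∩ colW G U x).card : ℝ)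
      = ∑ b : α, ((rowU U b ∩ nbhd G (rowU U b)).card : ℝ) := by
    exact_mod_cast congrArg (Nat.cast : ℕ → ℝ) (prod_count3 G U)
  have c4 : (U.card : ℝ) = ∑ b : α, ((rowU U b).card : ℝ) := by
    exact_mod_cast congrArg (Nat.cast : ℕ → ℝ) (prod_count4 U)
  calc (1 - a) * (U.card : ℝ)
      = ∑ b : α, (1 - a) * ((rowU U b).card : ℝ) := by rw [c4, Finset.mul_sum]
    _ ≤ ∑ b : α, (a * ((nbhd G (rowU U b)).card : ℝ)
          + (1 - 2*a) * ((rowU U b ∩ nbhd G (rowU U b)).card : ℝ)) :=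
        Finset.sum_le_sum (fun b _ => hb b)
    _ = a * (∑ b : α, ((nbhd G (rowU U b)).card : ℝ))
          + (1 - 2*a) * (∑ b : α, ((rowU U b ∩ nbhd G (rowU U b)).card : ℝ)) := by
        rw [Finset.sum_add_distrib, Finset.mul_sum, Finset.mul_sum]
    _ = a * (∑ x : α, ((colW G U x).card : ℝ))
          + (1 - 2*a) * (∑ x : α, ((colU U x ∩ colW G U x).card : ℝ)) := by
        rw [c2, c3]
    _ = ∑ x : α, (a * ((colW G U x).card : ℝ)
          + (1 - 2*a) * ((colU U x ∩ colW G U x).card : ℝ)) := by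
        rw [Finset.sum_add_distrib, Finset.mul_sum, Finset.mul_sum]
    _ ≤ ∑ x : α, a * ((nbhd G (colW G U x)).card : ℝ) :=
        Finset.sum_le_sum (fun x _ => hx x)
    _ = a * ((nbhd (tensorProd G G) U).card : ℝ) := by
        rw [c1, Finset.mul_sum]

end Main
section Lower

open Finset

variable {α : Type*} [Fintype α] [Nonempty α]

lemma lower_bound (G : SimpleGraph α) : aRatio G ≤ aRatio (tensorProd G G) := by
  obtain ⟨U, hne, hind, heq⟩ := aRatio_mem G
  set U2 : Finset (α × α) := U ×ˢ (Finset.univ : Finset α) with hU2def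
  have hne2 : U2.Nonempty := hne.product Finset.univ_nonempty
  have hind2 : IsIndep (tensorProd G G) U2 := by
    intro u hu v hv hadj
    rw [hU2def, Finset.mem_product] at hu hv
    exact hind _ hu.1 _ hv.1 hadj.1
  have hnbhd : nbhd (tensorProd G G) U2
      = (nbhd G U) ×ˢ (nbhd G (Finset.univ : Finset α)) := by
    ext ⟨y, c⟩
    simp only [nbhd, tensorProd, Finset.mem_filter, Finset.mem_univ, true_and,
      Finset.mem_product, hU2def]
    constructor
    · rintro ⟨⟨u, a⟩, ⟨hu, -⟩, h1, h2⟩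
      exact ⟨⟨u, hu, h1⟩, ⟨a, h2⟩⟩
    · rintro ⟨⟨u, hu, h1⟩, ⟨a, h2⟩⟩
      exact ⟨⟨u, a⟩, ⟨hu, trivial⟩, h1, h2⟩
  have hmem : ((U2.card : ℝ) / ((U2.card : ℝ) + ((nbhd (tensorProd G G) U2).card : ℝ)))
      ∈ ratioSet (tensorProd G G) := ⟨U2, hne2, hind2, rfl⟩
  refine le_trans ?_ (le_aRatio _ hmem)
  rw [heq]
  have hcard2 : (U2.card : ℝ) = (U.card : ℝ) * (Fintype.card α : ℝ) := by
    rw [hU2def, Finset.card_product, Finset.card_univ]; push_cast; ring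
  have hcardn : ((nbhd (tensorProd G G) U2).card : ℝ)
      = ((nbhd G U).card : ℝ) * ((nbhd G (Finset.univ : Finset α)).card : ℝ) := by
    rw [hnbhd, Finset.card_product]; push_cast; ring
  rw [hcard2, hcardn]
  have hk1 : (1:ℝ) ≤ (U.card : ℝ) := by
    exact_mod_cast Finset.card_pos.mpr hne
  have hn1 : (1:ℝ) ≤ (Fintype.card α : ℝ) := by
    exact_mod_cast Nat.one_le_iff_ne_zero.mpr Fintype.card_ne_zero
  have hm0 : (0:ℝ) ≤ ((nbhd G U).card : ℝ) := by positivity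
  have hl0 : (0:ℝ) ≤ ((nbhd G (Finset.univ : Finset α)).card : ℝ) := by positivity
  have hln : ((nbhd G (Finset.univ : Finset α)).card : ℝ) ≤ (Fintype.card α : ℝ) := by
    exact_mod_cast Finset.card_le_univ _
  rw [div_le_div_iff₀ (by nlinarith) (by nlinarith)]
  nlinarith [mul_le_mul_of_nonneg_left
    (mul_le_mul_of_nonneg_left hln hm0) (by linarith : (0:ℝ) ≤ (U.card : ℝ))]

end Lower
theorem stmt7 {α : Type*} [Fintype α] [Nonempty α] (G : SimpleGraph α) :
    aStar (tensorProd G G) = aStar G := by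
  have hlow : aRatio G ≤ aRatio (tensorProd G G) := lower_bound G
  by_cases h : aRatio G ≤ 1/2
  · have hup : aRatio (tensorProd G G) ≤ aRatio G := by
      apply aRatio_le
      rintro r ⟨U, hne, hind, rfl⟩
      have hm := main_upper G h hind
      have hk : (0:ℝ) < (U.card : ℝ) := by
        exact_mod_cast Finset.card_pos.mpr hne
      have hn0 : (0:ℝ) ≤ ((nbhd (tensorProd G G) U).card : ℝ) := by positivity
      rw [div_le_iff₀ (by linarith)]
      nlinarith
    have heq : aRatio (tensorProd G G) = aRatio G := le_antisymm hup hlow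
    unfold aStar
    rw [heq]
  · have h2 : ¬ aRatio (tensorProd G G) ≤ 1/2 := by
      push_neg at h ⊢
      linarith
    unfold aStar
    rw [if_neg h2, if_neg h]
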